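/- Let τ ∈ (0,1) and let F be a continuously differentiable CDF whose τ-quantile is a singleton, with finite first moment. Then the map V(y; e⁻, v, e⁺) = (e⁻ + (1/τ)S⁻_τ(y;v), 𝟙{y≤v} − τ, e⁺ − (1/(1−τ))S⁺_τ(y;v)) is a strict identification function for (ES⁻_τ, q_τ, ES⁺_τ): E_F[V(Y; e⁻,v,e⁺)] = 0 if and only if v = F⁻¹(τ), e⁻ = ES⁻_τ(F) and e⁺ = ES⁺_τ(F). -/

import Mathlib

open MeasureTheory

noncomputable def Sminus (τ y a : ℝ) : ℝ :=
  ((if y ≤ a then (1:ℝ) else 0) - τ) * a - (if y ≤ a then (1:ℝ) else 0) * y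

noncomputable def Splus (τ y a : ℝ) : ℝ :=
  (1 - τ - (if a < y then (1:ℝ) else 0)) * a + (if a < y then (1:ℝ) else 0) * y

noncomputable def genInv (μ : Measure ℝ) (p : ℝ) : ℝ :=
  sInf {x : ℝ | p ≤ (μ (Set.Iic x)).toReal}

noncomputable def ESminus (μ : Measure ℝ) (τ : ℝ) : ℝ :=
  (1 / τ) * ∫ p in Set.Ioc (0:ℝ) τ, genInv μ p

noncomputable def ESplus (μ : Measure ℝ) (τ : ℝ) : ℝ :=
  (1 / (1 - τ)) * ∫ p in Set.Ioc τ (1:ℝ), genInv μ p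

def quantileSet (μ : Measure ℝ) (τ : ℝ) : Set ℝ :=
  {t | (μ (Set.Iio t)).toReal ≤ τ ∧ τ ≤ (μ (Set.Iic t)).toReal}

section Aux

open Set Filter ProbabilityTheory Topology

variable {μ : Measure ℝ} [IsProbabilityMeasure μ]



lemma Fmono : Monotone (fun t : ℝ => (μ (Set.Iic t)).toReal) :=
  fun a b hab => ENNReal.toReal_mono (measure_ne_top μ _)
    (measure_mono (Set.Iic_subset_Iic.2 hab))

lemma F_eq_cdf : (fun t : ℝ => (μ (Set.Iic t)).toReal) = cdf μ :=
  funext fun x => (cdf_eq_real μ x).symm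

lemma S_nonempty {p : ℝ} (hp1 : p < 1) :
    {x : ℝ | p ≤ (μ (Set.Iic x)).toReal}.Nonempty := by
  have h := (tendsto_cdf_atTop (μ := μ)).eventually (eventually_ge_nhds hp1)
  obtain ⟨x, hx⟩ := h.exists
  exact ⟨x, by rw [Set.mem_setOf_eq, congrFun (F_eq_cdf (μ := μ)) x]; exact hx⟩

lemma S_bddBelow {p : ℝ} (hp0 : 0 < p) :
    BddBelow {x : ℝ | p ≤ (μ (Set.Iic x)).toReal} := by
  have h := (tendsto_cdf_atBot (μ := μ)).eventually (eventually_lt_nhds hp0)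
  obtain ⟨x0, hx0⟩ := (eventually_atBot).1 h
  refine ⟨x0, fun s hs => ?_⟩
  by_contra hlt
  push_neg at hlt
  have := hx0 s hlt.le
  rw [← congrFun (F_eq_cdf (μ := μ)) s] at this
  exact absurd hs (by simp only [Set.mem_setOf_eq]; linarith)

lemma genInv_mem (hFc : Continuous fun t : ℝ => (μ (Set.Iic t)).toReal)
    {p : ℝ} (hp0 : 0 < p) (hp1 : p < 1) :
    p ≤ (μ (Set.Iic (genInv μ p))).toReal := by
  have hclosed : IsClosed {x : ℝ | p ≤ (μ (Set.Iic x)).toReal} :=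
    isClosed_le continuous_const hFc
  exact hclosed.csInf_mem (S_nonempty hp1) (S_bddBelow hp0)

lemma genInv_le_iff (hFc : Continuous fun t : ℝ => (μ (Set.Iic t)).toReal)
    {p : ℝ} (hp0 : 0 < p) (hp1 : p < 1) (x : ℝ) :
    genInv μ p ≤ x ↔ p ≤ (μ (Set.Iic x)).toReal := by
  constructor
  · intro h
    exact le_trans (genInv_mem hFc hp0 hp1) (Fmono h)
  · intro h
    exact csInf_le (S_bddBelow hp0) h

lemma genInv_monotoneOn : MonotoneOn (genInv μ) (Set.Ioo (0:ℝ) 1) := by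
  intro p hp q hq hpq
  exact csInf_le_csInf (S_bddBelow hp.1) (S_nonempty hq.2)
    (fun x hx => le_trans hpq hx)

lemma genInv_aemeasurable :
    AEMeasurable (genInv μ) (volume.restrict (Set.Ioo (0:ℝ) 1)) :=
  aemeasurable_restrict_of_monotoneOn measurableSet_Ioo genInv_monotoneOn

lemma map_genInv (hFc : Continuous fun t : ℝ => (μ (Set.Iic t)).toReal) :
    Measure.map (genInv μ) (volume.restrict (Set.Ioo (0:ℝ) 1)) = μ := by
  refine (Measure.ext_of_Iic μ _ fun a => ?_).symm
  rw [Measure.map_apply_of_aemeasurable genInv_aemeasurable measurableSet_Iic,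
    Measure.restrict_apply' measurableSet_Ioo]
  have hF0 : (0:ℝ) ≤ (μ (Set.Iic a)).toReal := ENNReal.toReal_nonneg
  have hF1 : (μ (Set.Iic a)).toReal ≤ 1 := by
    rw [congrFun (F_eq_cdf (μ := μ)) a]; exact cdf_le_one μ a
  have hset : genInv μ ⁻¹' Set.Iic a ∩ Set.Ioo 0 1
      = Set.Iic ((μ (Set.Iic a)).toReal) ∩ Set.Ioo 0 1 := by
    ext p
    simp only [Set.mem_inter_iff, Set.mem_preimage, Set.mem_Iic, Set.mem_Ioo,
      and_congr_left_iff]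
    intro hp
    rw [genInv_le_iff hFc hp.1 hp.2]
  rw [hset]
  rcases eq_or_lt_of_le hF1 with h1 | h1
  · have : Set.Iic ((μ (Set.Iic a)).toReal) ∩ Set.Ioo (0:ℝ) 1 = Set.Ioo 0 1 := by
      rw [h1]
      exact Set.inter_eq_right.2 (fun x hx => le_of_lt hx.2)
    rw [this, Real.volume_Ioo, ← ENNReal.ofReal_toReal (measure_ne_top μ (Set.Iic a)), ← h1]
    norm_num
  · have : Set.Iic ((μ (Set.Iic a)).toReal) ∩ Set.Ioo (0:ℝ) 1
        = Set.Ioc 0 ((μ (Set.Iic a)).toReal) := by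
      ext x
      simp only [Set.mem_inter_iff, Set.mem_Iic, Set.mem_Ioo, Set.mem_Ioc]
      constructor
      · rintro ⟨h, h2, _⟩; exact ⟨h2, h⟩
      · rintro ⟨h2, h⟩; exact ⟨h, h2, lt_of_le_of_lt h h1⟩
    rw [this, Real.volume_Ioc, ← ENNReal.ofReal_toReal (measure_ne_top μ (Set.Iic a))]
    norm_num


lemma F_genInv_eq (hFc : Continuous fun t : ℝ => (μ (Set.Iic t)).toReal)
    {τ : ℝ} (hτ : τ ∈ Set.Ioo (0:ℝ) 1)
    (hsingleton : quantileSet μ τ = {genInv μ τ}) :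
    (μ (Set.Iic (genInv μ τ))).toReal = τ := by
  set v0 := genInv μ τ with hv0
  have hmem : v0 ∈ quantileSet μ τ := by rw [hsingleton]; rfl
  refine le_antisymm ?_ (genInv_mem hFc hτ.1 hτ.2)
  refine le_trans ?_ hmem.1
  have key : ∀ n : ℕ, (μ (Set.Iic (v0 - 1/(n+1)))).toReal ≤ (μ (Set.Iio v0)).toReal := by
    intro n
    refine ENNReal.toReal_mono (measure_ne_top μ _) (measure_mono ?_)
    refine Set.Iic_subset_Iio.2 ?_
    have : (0:ℝ) < 1/(n+1) := by positivity
    linarith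
  have hlim : Tendsto (fun n : ℕ => (μ (Set.Iic (v0 - 1/(n+1)))).toReal) atTop
      (𝓝 ((μ (Set.Iic v0)).toReal)) := by
    have h2 : Tendsto (fun n : ℕ => v0 - 1/(n+1)) atTop (𝓝 v0) := by
      have := tendsto_one_div_add_atTop_nhds_zero_nat (𝕜 := ℝ)
      have := tendsto_const_nhds (x := v0) (f := atTop (α := ℕ)) |>.sub this
      simpa using this
    exact (hFc.tendsto v0).comp h2
  exact le_of_tendsto hlim (Eventually.of_forall key)


lemma int_pull (hFc : Continuous fun t : ℝ => (μ (Set.Iic t)).toReal)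
    (f : ℝ → ℝ) (hf : Measurable f) :
    ∫ y, f y ∂μ = ∫ p in Set.Ioo (0:ℝ) 1, f (genInv μ p) := by
  conv_lhs => rw [← map_genInv hFc]
  exact integral_map genInv_aemeasurable hf.aestronglyMeasurable

lemma I1 (hFc : Continuous fun t : ℝ => (μ (Set.Iic t)).toReal)
    {τ : ℝ} (hτ : τ ∈ Set.Ioo (0:ℝ) 1)
    (hsingleton : quantileSet μ τ = {genInv μ τ}) :
    ∫ p in Set.Ioc (0:ℝ) τ, genInv μ p
      = ∫ y, (Set.Iic (genInv μ τ)).indicator id y ∂μ := by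
  set v0 := genInv μ τ with hv0
  rw [int_pull hFc _ (measurable_id.indicator measurableSet_Iic)]
  have hcongr : ∀ p ∈ Set.Ioo (0:ℝ) 1,
      (Set.Iic v0).indicator id (genInv μ p) = (Set.Iic τ).indicator (genInv μ) p := by
    intro p hp
    have hiff : genInv μ p ≤ v0 ↔ p ≤ τ := by
      rw [genInv_le_iff hFc hp.1 hp.2, F_genInv_eq hFc hτ hsingleton]
    simp only [Set.indicator_apply, Set.mem_Iic, hiff, id]
  rw [setIntegral_congr_fun measurableSet_Ioo hcongr,
    setIntegral_indicator measurableSet_Iic]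
  have hset : Set.Ioo (0:ℝ) 1 ∩ Set.Iic τ = Set.Ioc 0 τ := by
    ext x
    simp only [Set.mem_inter_iff, Set.mem_Ioo, Set.mem_Iic, Set.mem_Ioc]
    constructor
    · rintro ⟨⟨h1, _⟩, h3⟩; exact ⟨h1, h3⟩
    · rintro ⟨h1, h3⟩; exact ⟨⟨h1, lt_of_le_of_lt h3 hτ.2⟩, h3⟩
  rw [hset]

lemma I2 (hFc : Continuous fun t : ℝ => (μ (Set.Iic t)).toReal)
    {τ : ℝ} (hτ : τ ∈ Set.Ioo (0:ℝ) 1)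
    (hsingleton : quantileSet μ τ = {genInv μ τ}) :
    ∫ p in Set.Ioc τ (1:ℝ), genInv μ p
      = ∫ y, (Set.Ioi (genInv μ τ)).indicator id y ∂μ := by
  set v0 := genInv μ τ with hv0
  rw [int_pull hFc _ (measurable_id.indicator measurableSet_Ioi)]
  have hcongr : ∀ p ∈ Set.Ioo (0:ℝ) 1,
      (Set.Ioi v0).indicator id (genInv μ p) = (Set.Ioi τ).indicator (genInv μ) p := by
    intro p hp
    have hiff : v0 < genInv μ p ↔ τ < p := by
      rw [← not_le, ← not_le, genInv_le_iff hFc hp.1 hp.2, F_genInv_eq hFc hτ hsingleton]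
    simp only [Set.indicator_apply, Set.mem_Ioi, hiff, id]
  rw [setIntegral_congr_fun measurableSet_Ioo hcongr,
    setIntegral_indicator measurableSet_Ioi, integral_Ioc_eq_integral_Ioo]
  have hset : Set.Ioo (0:ℝ) 1 ∩ Set.Ioi τ = Set.Ioo τ 1 := by
    ext x
    simp only [Set.mem_inter_iff, Set.mem_Ioo, Set.mem_Ioi]
    constructor
    · rintro ⟨⟨_, h2⟩, h3⟩; exact ⟨h3, h2⟩
    · rintro ⟨h3, h2⟩; exact ⟨⟨lt_trans hτ.1 h3, h2⟩, h3⟩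
  rw [hset]




lemma Sminus_eq (τ v : ℝ) : (fun y => Sminus τ y v) = fun y =>
    ((Set.Iic v).indicator (fun _ => (1:ℝ)) y - τ) * v - (Set.Iic v).indicator id y := by
  funext y
  simp only [Sminus, Set.indicator_apply, Set.mem_Iic, id]
  split_ifs <;> ring

lemma Splus_eq (τ v : ℝ) : (fun y => Splus τ y v) = fun y =>
    (1 - τ - (Set.Ioi v).indicator (fun _ => (1:ℝ)) y) * v + (Set.Ioi v).indicator id y := by
  funext y
  simp only [Splus, Set.indicator_apply, Set.mem_Ioi, id]
  split_ifs <;> ring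

lemma Sminus_integrable {τ v : ℝ} (hY : Integrable (fun y : ℝ => y) μ) :
    Integrable (fun y => Sminus τ y v) μ := by
  rw [Sminus_eq]
  exact ((((integrable_const (1:ℝ)).indicator measurableSet_Iic).sub
    (integrable_const τ)).mul_const v).sub (hY.indicator measurableSet_Iic)

lemma Splus_integrable {τ v : ℝ} (hY : Integrable (fun y : ℝ => y) μ) :
    Integrable (fun y => Splus τ y v) μ := by
  rw [Splus_eq]
  exact (((integrable_const ((1:ℝ) - τ)).sub
    ((integrable_const (1:ℝ)).indicator measurableSet_Ioi)).mul_const v).add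
    (hY.indicator measurableSet_Ioi)

lemma toReal_Ioi (v : ℝ) : (μ (Set.Ioi v)).toReal = 1 - (μ (Set.Iic v)).toReal := by
  have h : μ (Set.Ioi v) = 1 - μ (Set.Iic v) := by
    rw [← Set.compl_Iic, measure_compl measurableSet_Iic (measure_ne_top μ _), measure_univ]
  rw [h, ENNReal.toReal_sub_of_le prob_le_one ENNReal.one_ne_top, ENNReal.toReal_one]

lemma int_Sminus {τ v : ℝ} (hY : Integrable (fun y : ℝ => y) μ) :
    ∫ y, Sminus τ y v ∂μ = ((μ (Set.Iic v)).toReal - τ) * v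
      - ∫ y, (Set.Iic v).indicator id y ∂μ := by
  have hA : Integrable (fun y : ℝ => ((Set.Iic v).indicator (fun _ => (1:ℝ)) y - τ) * v) μ :=
    (((integrable_const (1:ℝ)).indicator measurableSet_Iic).sub (integrable_const τ)).mul_const v
  have hB : Integrable (fun y : ℝ => (Set.Iic v).indicator id y) μ :=
    hY.indicator measurableSet_Iic
  have hC : Integrable (fun y : ℝ => (Set.Iic v).indicator (fun _ => (1:ℝ)) y) μ :=
    (integrable_const (1:ℝ)).indicator measurableSet_Iic
  rw [Sminus_eq, integral_sub hA hB, integral_mul_const,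
    integral_sub hC (integrable_const τ),
    integral_indicator_const _ measurableSet_Iic, integral_const]
  simp [measure_univ, measureReal_def]

lemma int_Splus {τ v : ℝ} (hY : Integrable (fun y : ℝ => y) μ) :
    ∫ y, Splus τ y v ∂μ = ((μ (Set.Iic v)).toReal - τ) * v
      + ∫ y, (Set.Ioi v).indicator id y ∂μ := by
  have hC : Integrable (fun y : ℝ => (Set.Ioi v).indicator (fun _ => (1:ℝ)) y) μ :=
    (integrable_const (1:ℝ)).indicator measurableSet_Ioi
  have hA : Integrable (fun y : ℝ => (1 - τ - (Set.Ioi v).indicator (fun _ => (1:ℝ)) y) * v) μ :=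
    ((integrable_const ((1:ℝ) - τ)).sub hC).mul_const v
  have hB : Integrable (fun y : ℝ => (Set.Ioi v).indicator id y) μ :=
    hY.indicator measurableSet_Ioi
  rw [Splus_eq, integral_add hA hB, integral_mul_const,
    integral_sub (integrable_const ((1:ℝ) - τ)) hC,
    integral_indicator_const _ measurableSet_Ioi, integral_const,
    measureReal_def μ (Set.Ioi v), toReal_Ioi]
  simp [measure_univ]
  try ring

lemma E2 (τ v : ℝ) :
    ∫ y, ((if y ≤ v then (1:ℝ) else 0) - τ) ∂μ = (μ (Set.Iic v)).toReal - τ := by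
  have h : (fun y : ℝ => (if y ≤ v then (1:ℝ) else 0) - τ)
      = fun y => (Set.Iic v).indicator (fun _ => (1:ℝ)) y - τ := by
    funext y; simp [Set.indicator_apply]
  have hC : Integrable (fun y : ℝ => (Set.Iic v).indicator (fun _ => (1:ℝ)) y) μ :=
    (integrable_const (1:ℝ)).indicator measurableSet_Iic
  rw [h, integral_sub hC (integrable_const τ),
    integral_indicator_const _ measurableSet_Iic, integral_const]
  simp [measure_univ, measureReal_def]

lemma E1 {τ : ℝ} (hY : Integrable (fun y : ℝ => y) μ) (em v : ℝ) :
    ∫ y, (em + (1/τ) * Sminus τ y v) ∂μ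
      = em + (1/τ) * (((μ (Set.Iic v)).toReal - τ) * v
          - ∫ y, (Set.Iic v).indicator id y ∂μ) := by
  rw [integral_add (integrable_const em) ((Sminus_integrable hY).const_mul (1/τ)),
    integral_const_mul, integral_const, int_Sminus hY]
  simp [measure_univ]

lemma E3 {τ : ℝ} (hY : Integrable (fun y : ℝ => y) μ) (ep v : ℝ) :
    ∫ y, (ep - (1/(1-τ)) * Splus τ y v) ∂μ
      = ep - (1/(1-τ)) * (((μ (Set.Iic v)).toReal - τ) * v
          + ∫ y, (Set.Ioi v).indicator id y ∂μ) := by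
  rw [integral_sub (integrable_const ep) ((Splus_integrable hY).const_mul (1/(1-τ))),
    integral_const_mul, integral_const, int_Splus hY]
  simp [measure_univ]

end Aux

/-- V is a strict identification function for the composite triplet
(ES⁻_τ, q_τ, ES⁺_τ) on continuously differentiable CDFs with a singleton τ-quantile. -/
theorem identification_function_composite_triplet
    (τ : ℝ) (hτ : τ ∈ Set.Ioo (0:ℝ) 1)
    (μ : Measure ℝ) [IsProbabilityMeasure μ]
    (hY : Integrable (fun y : ℝ => y) μ)
    (hF : ContDiff ℝ 1 (fun t : ℝ => (μ (Set.Iic t)).toReal))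
    (hsingleton : quantileSet μ τ = {genInv μ τ}) :
    ∀ em v ep : ℝ,
      ((∫ y, (em + (1/τ) * Sminus τ y v) ∂μ) = 0 ∧
       (∫ y, ((if y ≤ v then (1:ℝ) else 0) - τ) ∂μ) = 0 ∧
       (∫ y, (ep - (1/(1-τ)) * Splus τ y v) ∂μ) = 0)
      ↔ (v = genInv μ τ ∧ em = ESminus μ τ ∧ ep = ESplus μ τ) := by
  intro em v ep
  have hFc : Continuous fun t : ℝ => (μ (Set.Iic t)).toReal := hF.continuous
  have hτ0 : τ ≠ 0 := ne_of_gt hτ.1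
  have hτ1 : (1:ℝ) - τ ≠ 0 := sub_ne_zero.2 (ne_of_lt hτ.2).symm
  have hFv0 : (μ (Set.Iic (genInv μ τ))).toReal = τ := F_genInv_eq hFc hτ hsingleton
  constructor
  · rintro ⟨h1, h2, h3⟩
    rw [E2] at h2
    have hFv : (μ (Set.Iic v)).toReal = τ := by linarith
    have hvq : v ∈ quantileSet μ τ :=
      ⟨le_trans (ENNReal.toReal_mono (measure_ne_top μ _)
        (measure_mono Set.Iio_subset_Iic_self)) hFv.le, hFv.ge⟩
    rw [hsingleton] at hvq
    have hv : v = genInv μ τ := hvq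
    rw [E1 hY, hFv] at h1
    rw [E3 hY, hFv] at h3
    refine ⟨hv, ?_, ?_⟩
    · simp only [ESminus]
      rw [I1 hFc hτ hsingleton, ← hv]
      field_simp at h1 ⊢
      linarith
    · simp only [ESplus]
      rw [I2 hFc hτ hsingleton, ← hv]
      field_simp at h3 ⊢
      linarith
  · rintro ⟨hv, hem, hep⟩
    subst hv hem hep
    refine ⟨?_, ?_, ?_⟩
    · rw [E1 hY, hFv0]
      simp only [ESminus]
      rw [I1 hFc hτ hsingleton]
      field_simp
      ring
    · rw [E2, hFv0]; ring
    · rw [E3 hY, hFv0]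
      simp only [ESplus]
      rw [I2 hFc hτ hsingleton]
      field_simp
      ring
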